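/- Let ψ' be a 3-cocycle of the Virasoro algebra V with values in the trivial module K that is homogeneous of degree zero and satisfies ψ'(ê_1, ê_{−1}, ê_0) = 0. Then there exists a 2-cochain φ of V with values in K such that the cohomologous cocycle ψ = ψ' − δ_2 φ satisfies: ψ(ê_i, ê_j, ê_1) = 0 for all i, j ∈ ℤ, and ψ(ê_i, ê_j, t) = δ_{i,−j} · (1/6) i (i − 1)(i + 1) · ψ(ê_2, ê_{−2}, t) for all i, j ∈ ℤ. -/

import Mathlib

/-- `E : ℤ → V` together with the central element `t` realize `V` as the Virasoro
algebra over `K`: the `E n` together with `t` form a `K`-basis,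
`⁅E n, E m⁆ = (m - n) • E (n + m) - (1/12)(n³ - n) δ_{n+m,0} • t` and `⁅E n, t⁆ = 0`. -/
def IsVirasoroAlgebra (K : Type*) {V : Type*} [Field K] [LieRing V] [LieAlgebra K V]
    (E : ℤ → V) (t : V) : Prop :=
  (∃ b : Module.Basis (Option ℤ) K V, b none = t ∧ ∀ n : ℤ, b (some n) = E n) ∧
    (∀ n m : ℤ, ⁅E n, E m⁆ = (m - n) • E (n + m) +
      (if n + m = 0 then -((((n : K) ^ 3 - (n : K)) / 12)) else 0) • t) ∧
    ∀ n : ℤ, ⁅E n, t⁆ = 0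

/-- The Chevalley–Eilenberg coboundary of a 2-cochain with values in the trivial module. -/
def lieD2 (K : Type*) {L : Type*} [Field K] [LieRing L] [LieAlgebra K L]
    (φ : AlternatingMap K L K (Fin 2)) (x₁ x₂ x₃ : L) : K :=
  φ ![⁅x₁, x₂⁆, x₃] - φ ![⁅x₁, x₃⁆, x₂] + φ ![⁅x₂, x₃⁆, x₁]

/-- A 3-cochain with values in the trivial module `K` is a cocycle: `δ₃ ψ = 0`. -/
def IsLieCocycle3 (K : Type*) {L : Type*} [Field K] [LieRing L] [LieAlgebra K L]
    (ψ : AlternatingMap K L K (Fin 3)) : Prop :=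
  ∀ x₁ x₂ x₃ x₄ : L,
    ψ ![⁅x₁, x₂⁆, x₃, x₄] - ψ ![⁅x₁, x₃⁆, x₂, x₄] + ψ ![⁅x₁, x₄⁆, x₂, x₃]
      + ψ ![⁅x₂, x₃⁆, x₁, x₄] - ψ ![⁅x₂, x₄⁆, x₁, x₃] + ψ ![⁅x₃, x₄⁆, x₁, x₂] = 0

/-- A 3-cochain with values in the trivial module `K` is a coboundary: `ψ = δ₂ φ`. -/
def IsLieCoboundary3 (K : Type*) {L : Type*} [Field K] [LieRing L] [LieAlgebra K L]
    (ψ : AlternatingMap K L K (Fin 3)) : Prop :=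
  ∃ φ : AlternatingMap K L K (Fin 2), ∀ x₁ x₂ x₃ : L,
    ψ ![x₁, x₂, x₃] = lieD2 K φ x₁ x₂ x₃

section VirasoroHelpers

set_option linter.unusedSectionVars false

variable {K V : Type*} [Field K] [AddCommGroup V] [Module K V]

private lemma upd3_0 (u y z x : V) : Function.update ![u, y, z] 0 x = ![x, y, z] := by
  funext i; fin_cases i <;> simp

private lemma upd2_0 (u y x : V) : Function.update ![u, y] 0 x = ![x, y] := by
  funext i; fin_cases i <;> simp

private lemma alt3_lin (ψ : AlternatingMap K V K (Fin 3)) (α β : K) (u w y z : V) :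
    ψ ![α • u + β • w, y, z] = α * ψ ![u, y, z] + β * ψ ![w, y, z] := by
  have h1 : (![α • u + β • w, y, z] : Fin 3 → V)
      = Function.update ![u, y, z] 0 (α • u + β • w) := (upd3_0 u y z _).symm
  rw [h1, ψ.map_update_add, ψ.map_update_smul]
  have h2 : Function.update ![u, y, z] 0 (β • w) = ![β • w, y, z] := upd3_0 u y z _
  rw [h2, upd3_0]
  have h3 : (![β • w, y, z] : Fin 3 → V) = Function.update ![w, y, z] 0 (β • w) := by
    rw [upd3_0]
  rw [h3, ψ.map_update_smul, upd3_0, smul_eq_mul, smul_eq_mul]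

private lemma alt2_lin (φ : AlternatingMap K V K (Fin 2)) (α β : K) (u w y : V) :
    φ ![α • u + β • w, y] = α * φ ![u, y] + β * φ ![w, y] := by
  have h1 : (![α • u + β • w, y] : Fin 2 → V)
      = Function.update ![u, y] 0 (α • u + β • w) := (upd2_0 u y _).symm
  rw [h1, φ.map_update_add, φ.map_update_smul]
  have h2 : Function.update ![u, y] 0 (β • w) = ![β • w, y] := upd2_0 u y _
  rw [h2, upd2_0]
  have h3 : (![β • w, y] : Fin 2 → V) = Function.update ![w, y] 0 (β • w) := by
    rw [upd2_0]
  rw [h3, φ.map_update_smul, upd2_0, smul_eq_mul, smul_eq_mul]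

private lemma alt3_swap01 (ψ : AlternatingMap K V K (Fin 3)) (x y z : V) :
    ψ ![y, x, z] = -ψ ![x, y, z] := by
  have h := ψ.map_swap (v := ![x, y, z]) (i := 0) (j := 1) (by decide)
  have hv : (![x, y, z] : Fin 3 → V) ∘ Equiv.swap (0 : Fin 3) 1 = ![y, x, z] := by
    funext i; fin_cases i <;> simp [Equiv.swap_apply_def]
  rwa [hv] at h

private lemma alt3_swap02 (ψ : AlternatingMap K V K (Fin 3)) (x y z : V) :
    ψ ![z, y, x] = -ψ ![x, y, z] := by
  have h := ψ.map_swap (v := ![x, y, z]) (i := 0) (j := 2) (by decide)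
  have hv : (![x, y, z] : Fin 3 → V) ∘ Equiv.swap (0 : Fin 3) 2 = ![z, y, x] := by
    funext i; fin_cases i <;> simp [Equiv.swap_apply_def]
  rwa [hv] at h

private lemma alt3_eq02 (ψ : AlternatingMap K V K (Fin 3)) (x y : V) :
    ψ ![x, y, x] = 0 :=
  ψ.map_eq_zero_of_eq _ (show (![x, y, x] : Fin 3 → V) 0 = ![x, y, x] 2 by simp) (by decide)

private lemma alt3_eq01 (ψ : AlternatingMap K V K (Fin 3)) (x z : V) :
    ψ ![x, x, z] = 0 :=
  ψ.map_eq_zero_of_eq _ (show (![x, x, z] : Fin 3 → V) 0 = ![x, x, z] 1 by simp) (by decide)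

private lemma alt3_zero0 (ψ : AlternatingMap K V K (Fin 3)) (y z : V) :
    ψ ![0, y, z] = 0 :=
  ψ.map_coord_zero 0 (by simp)

private lemma alt2_zero0 (φ : AlternatingMap K V K (Fin 2)) (y : V) :
    φ ![0, y] = 0 :=
  φ.map_coord_zero 0 (by simp)

/-- build a 2-alternating map from a bilinear form by antisymmetrization -/
private def mkAlt2 (F : V →ₗ[K] V →ₗ[K] K) : AlternatingMap K V K (Fin 2) where
  toFun v := F (v 0) (v 1) - F (v 1) (v 0)
  map_update_add' := by
    intro dec m i x y
    fin_cases i <;>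
      simp [Function.update_apply, Subsingleton.elim dec (instDecidableEqFin 2)] <;> ring
  map_update_smul' := by
    intro dec m i c x
    fin_cases i <;>
      simp [Function.update_apply, Subsingleton.elim dec (instDecidableEqFin 2),
        smul_eq_mul] <;> ring
  map_eq_zero_of_eq' := by
    intro v i j h hij
    have hv : v 0 = v 1 := by
      fin_cases i <;> fin_cases j <;> simp_all
    simp [hv]

private lemma mkAlt2_apply (F : V →ₗ[K] V →ₗ[K] K) (x y : V) :
    mkAlt2 F ![x, y] = F x y - F y x := rfl

/-- coefficient matrix for the normalizing 2-cochain -/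
private def cmat (a : ℤ → K) (b0 : K) : Option ℤ → Option ℤ → K
  | some m, some n => if m + n = 0 then a m / 2 else 0
  | some m, none => if m = 0 then b0 / 2 else 0
  | none, some n => if n = 0 then -(b0 / 2) else 0
  | none, none => 0

private lemma cmat_ss (a : ℤ → K) (b0 : K) (m n : ℤ) :
    cmat a b0 (some m) (some n) = if m + n = 0 then a m / 2 else 0 := rfl

private lemma cmat_sn (a : ℤ → K) (b0 : K) (m : ℤ) :
    cmat a b0 (some m) none = if m = 0 then b0 / 2 else 0 := rfl

private lemma cmat_ns (a : ℤ → K) (b0 : K) (n : ℤ) :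
    cmat a b0 none (some n) = if n = 0 then -(b0 / 2) else 0 := rfl

private lemma cmat_nn (a : ℤ → K) (b0 : K) : cmat a b0 none none = 0 := rfl

/-- the recursively defined coefficients `a_n`, `n ≥ 0` -/
private def aN (f : ℤ → K) : ℕ → K
  | 0 => 0
  | 1 => 0
  | 2 => 0
  | (k + 3) => (f ((k : ℤ) + 2) + ((k : K) + 4) * aN f (k + 2)) / ((k : K) + 1)

private lemma aN_succ (f : ℤ → K) (k : ℕ) :
    aN f (k + 3) = (f ((k : ℤ) + 2) + ((k : K) + 4) * aN f (k + 2)) / ((k : K) + 1) := rfl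

private lemma aN_eq [CharZero K] (f : ℤ → K) (hf0 : f 0 = 0) (hf1 : f 1 = 0) :
    ∀ n : ℕ, -((1 : K) - (n : K)) * aN f (n + 1) - ((2 : K) + (n : K)) * aN f n = f (n : ℤ) := by
  intro n
  match n with
  | 0 => simp [aN, hf0]
  | 1 => simp [aN, hf1]
  | (k + 2) =>
    have hne : ((k : K) + 1) ≠ 0 := Nat.cast_add_one_ne_zero k
    show -((1 : K) - ((k + 2 : ℕ) : K)) * aN f (k + 3)
        - ((2 : K) + ((k + 2 : ℕ) : K)) * aN f (k + 2) = f ((k + 2 : ℕ) : ℤ)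
    rw [aN_succ]
    have h2 : f (((k + 2 : ℕ)) : ℤ) = f ((k : ℤ) + 2) := by norm_num
    rw [h2]
    push_cast
    field_simp
    ring

end VirasoroHelpers
/-- if `ψ'` is a degree-zero 3-cocycle of the Virasoro algebra with values
in the trivial module `K` and `ψ'(ê₁, ê₋₁, ê₀) = 0`, then there is a 2-cochain `φ` such
that the cohomologous cocycle `ψ = ψ' - δ₂ φ` satisfies `ψ(ê i, ê j, ê 1) = 0` and
`ψ(ê i, ê j, t) = δ_{i,-j} (1/6) i (i-1)(i+1) ψ(ê 2, ê₋₂, t)` for all `i, j`. -/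
theorem virasoro_cocycle_normalize_level_one
    {K V : Type*} [Field K] [CharZero K] [LieRing V] [LieAlgebra K V]
    (E : ℤ → V) (t : V) (hV : IsVirasoroAlgebra K E t)
    (ψ' : AlternatingMap K V K (Fin 3)) (hcoc : IsLieCocycle3 K ψ')
    (hdeg : ∀ i j k : ℤ, i + j + k ≠ 0 → ψ' ![E i, E j, E k] = 0)
    (hdegt : ∀ i j : ℤ, i + j ≠ 0 → ψ' ![E i, E j, t] = 0)
    (h0 : ψ' ![E 1, E (-1), E 0] = 0) :
    ∃ φ : AlternatingMap K V K (Fin 2),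
      (∀ i j : ℤ, ψ' ![E i, E j, E 1] - lieD2 K φ (E i) (E j) (E 1) = 0) ∧
      (∀ i j : ℤ, ψ' ![E i, E j, t] - lieD2 K φ (E i) (E j) t =
        (if i = -j then ((i : K) * ((i : K) - 1) * ((i : K) + 1)) / 6 else 0) *
          (ψ' ![E 2, E (-2), t] - lieD2 K φ (E 2) (E (-2)) t)) := by
  classical
  obtain ⟨⟨b, hbt, hbE⟩, hbr, hbrt⟩ := hV
  -- the fundamental degree-zero data
  set f : ℤ → K := fun i => ψ' ![E i, E (-1 - i), E 1] with hf
  set g' : ℤ → K := fun i => ψ' ![E i, E (-i), t] with hg'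
  set b0 : K := -(g' 1) / 2 with hb0
  set a : ℤ → K := fun i => if 0 ≤ i then aN f i.toNat else -aN f (-i).toNat with ha
  have hfapp : ∀ i : ℤ, ψ' ![E i, E (-1 - i), E 1] = f i := fun i => by simp only [hf]
  have hg'app : ∀ i : ℤ, ψ' ![E i, E (-i), t] = g' i := fun i => by simp only [hg']
  -- bracket with K-scalars
  have hbrK : ∀ n m : ℤ, ⁅E n, E m⁆ = ((m : K) - (n : K)) • E (n + m) +
      (if n + m = 0 then -((((n : K)) ^ 3 - (n : K)) / 12) else 0) • t := by
    intro n m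
    rw [hbr n m]
    congr 1
    rw [← Int.cast_smul_eq_zsmul K]
    push_cast
    ring_nf
  -- basic facts about f
  have hfswap : ∀ i : ℤ, f (-1 - i) = -f i := by
    intro i
    rw [← hfapp i, ← hfapp (-1 - i)]
    rw [show (-1 - (-1 - i) : ℤ) = i from by ring]
    exact alt3_swap01 ψ' (E i) (E (-1 - i)) (E 1)
  have hf0 : f 0 = 0 := by
    rw [← hfapp 0, show (-1 - 0 : ℤ) = -1 from by ring]
    rw [show (ψ' ![E 0, E (-1), E 1] : K) = -ψ' ![E 1, E (-1), E 0] from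
      alt3_swap02 ψ' (E 1) (E (-1)) (E 0)]
    rw [h0]; ring
  have hf1 : f 1 = 0 := by
    rw [← hfapp 1, show (-1 - 1 : ℤ) = -2 from by ring]
    exact alt3_eq02 ψ' (E 1) (E (-2))
  -- basic facts about a
  have hanat : ∀ n : ℕ, a (n : ℤ) = aN f n := by
    intro n
    simp only [ha]
    rw [if_pos (by positivity)]
    simp
  have haodd : ∀ m : ℤ, a (-m) = -a m := by
    intro m
    rcases lt_trichotomy m 0 with h | h | h
    · simp only [ha]
      rw [if_pos (by omega), if_neg (by omega)]
      simp
    · subst h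
      simp only [ha]
      norm_num [aN]
    · simp only [ha]
      rw [if_neg (by omega), if_pos (by omega)]
      simp
  have ha0 : a 0 = 0 := by have := hanat 0; simpa [aN] using this
  have ha1 : a 1 = 0 := by have := hanat 1; simpa [aN] using this
  have ham1 : a (-1) = 0 := by rw [haodd 1, ha1]; ring
  -- the key equation for a
  have hEq : ∀ i : ℤ, -((1 : K) - (i : K)) * a (i + 1) - ((2 : K) + (i : K)) * a i = f i := by
    have hEnat : ∀ n : ℕ,
        -((1 : K) - (((n : ℤ)) : K)) * a ((n : ℤ) + 1) - ((2 : K) + (((n : ℤ)) : K)) * a (n : ℤ)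
          = f (n : ℤ) := by
      intro n
      have h1 : a ((n : ℤ) + 1) = aN f (n + 1) := by
        rw [show (n : ℤ) + 1 = ((n + 1 : ℕ) : ℤ) from by push_cast; ring, hanat]
      rw [h1, hanat n]
      have h2 := aN_eq f hf0 hf1 n
      push_cast at h2 ⊢
      linear_combination h2
    intro i
    rcases le_or_gt 0 i with h | h
    · obtain ⟨n, rfl⟩ := Int.eq_ofNat_of_zero_le h
      exact hEnat n
    · obtain ⟨n, hn⟩ := Int.eq_ofNat_of_zero_le (show (0 : ℤ) ≤ -1 - i from by omega)
      have hj := hEnat n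
      rw [← hn] at hj
      have h1 : a (-1 - i + 1) = -a i := by
        rw [show (-1 - i + 1 : ℤ) = -i from by ring, haodd]
      have h2 : a (-1 - i) = -a (i + 1) := by
        rw [show (-1 - i : ℤ) = -(i + 1) from by ring, haodd]
      rw [h1, h2, hfswap i] at hj
      push_cast at hj ⊢
      linear_combination -hj
  -- the normalizing 2-cochain
  set F : V →ₗ[K] V →ₗ[K] K := b.constr K fun o => b.constr K fun o' => cmat a b0 o o' with hF
  set Φ : AlternatingMap K V K (Fin 2) := mkAlt2 F with hΦ
  have hFE : ∀ o o' : Option ℤ, F (b o) (b o') = cmat a b0 o o' := by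
    intro o o'
    simp only [hF, Module.Basis.constr_basis]
  have hφEE : ∀ m n : ℤ, Φ ![E m, E n] = if m + n = 0 then a m else 0 := by
    intro m n
    rw [hΦ, ← hbE m, ← hbE n, mkAlt2_apply, hFE, hFE, cmat_ss, cmat_ss]
    rcases eq_or_ne (m + n) 0 with h | h
    · have hn : n = -m := by omega
      subst hn
      rw [if_pos h, if_pos (by omega), if_pos (by omega), haodd m]
      ring
    · rw [if_neg h, if_neg (by omega), if_neg (by omega)]
      ring
  have hφEt : ∀ m : ℤ, Φ ![E m, t] = if m = 0 then b0 else 0 := by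
    intro m
    rw [hΦ, ← hbE m, ← hbt, mkAlt2_apply, hFE, hFE, cmat_sn, cmat_ns]
    split_ifs <;> ring
  have hφtE : ∀ n : ℤ, Φ ![t, E n] = -if n = 0 then b0 else 0 := by
    intro n
    rw [hΦ, ← hbE n, ← hbt, mkAlt2_apply, hFE, hFE, cmat_sn, cmat_ns]
    split_ifs <;> ring
  have hφtt : Φ ![t, t] = 0 := by
    rw [hΦ, mkAlt2_apply]; ring
  have hzero1 : ∀ i : ℤ, (if i + 1 = 0 then -((((i : K)) ^ 3 - (i : K)) / 12) else 0) = 0 := by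
    intro i
    split_ifs with h
    · have : i = -1 := by omega
      subst this
      push_cast
      norm_num
    · rfl
  -- value of the coboundary on (E i, E j, E 1)
  have hD2E : ∀ i j : ℤ, lieD2 K Φ (E i) (E j) (E 1) =
      ((j : K) - (i : K)) * (if i + j + 1 = 0 then a (i + j) else 0)
      - ((1 : K) - (i : K)) * (if i + 1 + j = 0 then a (i + 1) else 0)
      + ((1 : K) - (j : K)) * (if j + 1 + i = 0 then a (j + 1) else 0) := by
    intro i j
    simp only [lieD2]
    rw [hbrK i j, hbrK i 1, hbrK j 1]
    rw [alt2_lin, alt2_lin, alt2_lin]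
    rw [hφEE (i + j) 1, hφEE (i + 1) j, hφEE (j + 1) i]
    rw [hφtE 1, hφtE j, hφtE i]
    rw [hzero1 i, hzero1 j]
    push_cast
    ring
  -- value of the coboundary on (E i, E j, t)
  have hD2t : ∀ i j : ℤ, lieD2 K Φ (E i) (E j) t =
      ((j : K) - (i : K)) * (if i + j = 0 then b0 else 0) := by
    intro i j
    simp only [lieD2]
    rw [hbrK i j, hbrt i, hbrt j]
    rw [alt2_lin, hφEt (i + j), hφtt, alt2_zero0, alt2_zero0]
    ring
  -- antisymmetry of g'
  have hg'odd : ∀ i : ℤ, g' (-i) = -g' i := by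
    intro i
    rw [← hg'app i, ← hg'app (-i), show (-(-i) : ℤ) = i from neg_neg i]
    exact alt3_swap01 ψ' (E i) (E (-i)) t
  -- the cocycle identity specialized to (E i, E 1, E (-1-i), t)
  have hrec : ∀ i : ℤ, ((1 : K) - (i : K)) * g' (i + 1) + ((2 : K) + (i : K)) * g' i
      = (2 * (i : K) + 1) * g' 1 := by
    intro i
    have hc := hcoc (E i) (E 1) (E (-1 - i)) t
    rw [hbrt i, hbrt 1, hbrt (-1 - i)] at hc
    rw [alt3_zero0 ψ' (E 1) (E (-1 - i)), alt3_zero0 ψ' (E i) (E (-1 - i)),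
      alt3_zero0 ψ' (E i) (E 1)] at hc
    rw [hbrK i 1, hbrK i (-1 - i), hbrK 1 (-1 - i)] at hc
    rw [alt3_lin, alt3_lin, alt3_lin] at hc
    rw [show i + (-1 - i) = (-1 : ℤ) from by ring,
      show (1 : ℤ) + (-1 - i) = -i from by ring] at hc
    rw [show (-1 - i : ℤ) = -(i + 1) from by ring] at hc
    rw [alt3_eq02 ψ' t (E (-(i + 1))), alt3_eq02 ψ' t (E 1), alt3_eq02 ψ' t (E i)] at hc
    rw [alt3_swap01 ψ' (E 1) (E (-1)) t, alt3_swap01 ψ' (E i) (E (-i)) t] at hc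
    rw [hg'app (i + 1), hg'app 1, hg'app i] at hc
    push_cast at hc
    linear_combination hc
  -- the normalized values G i = ψ (E i, E (-i), t)
  set G : ℤ → K := fun i => g' i + 2 * (i : K) * b0 with hG
  have hGapp : ∀ i : ℤ, g' i + 2 * (i : K) * b0 = G i := fun i => by simp only [hG]
  have h2b0 : g' 1 + 2 * b0 = 0 := by rw [hb0]; ring
  have hG1 : G 1 = 0 := by
    rw [← hGapp 1]
    push_cast
    linear_combination h2b0
  have hG0 : G 0 = 0 := by
    rw [← hGapp 0, ← hg'app 0, show (-(0:ℤ)) = 0 from by ring]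
    rw [alt3_eq01 ψ' (E 0) t]
    push_cast
    ring
  have hGodd : ∀ i : ℤ, G (-i) = -G i := by
    intro i
    rw [← hGapp (-i), ← hGapp i, hg'odd i]
    push_cast
    ring
  have hGrec : ∀ i : ℤ, ((1 : K) - (i : K)) * G (i + 1) + ((2 : K) + (i : K)) * G i = 0 := by
    intro i
    rw [← hGapp (i + 1), ← hGapp i]
    push_cast
    linear_combination hrec i + (2 * (i : K) + 1) * h2b0
  have hGup : ∀ n : ℤ, 2 ≤ n → G n = ((n : K) * ((n : K) - 1) * ((n : K) + 1)) / 6 * G 2 := by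
    intro n
    refine Int.le_induction
      (motive := fun k _ => G k = ((k : K) * ((k : K) - 1) * ((k : K) + 1)) / 6 * G 2) ?_ ?_ n
    · push_cast; norm_num
    · intro m hm ih
      have hr := hGrec m
      have h1m : ((1 : K) - (m : K)) ≠ 0 := by
        have hm1 : ((m : K)) ≠ 1 := by exact_mod_cast (show m ≠ 1 from by omega)
        intro hcon
        exact hm1 (by linear_combination -hcon)
      push_cast
      apply mul_left_cancel₀ h1m
      linear_combination hr - ((2 : K) + (m : K)) * ih
  have hGint : ∀ i : ℤ, G i = ((i : K) * ((i : K) - 1) * ((i : K) + 1)) / 6 * G 2 := by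
    intro i
    rcases le_or_gt 2 i with h | h
    · exact hGup i h
    rcases le_or_gt i (-2) with h' | h'
    · have h1 : G i = -G (-i) := by
        have := hGodd (-i)
        rw [neg_neg] at this
        linear_combination this
      have h2 := hGup (-i) (by omega)
      rw [h1, h2]
      push_cast
      ring
    · interval_cases i
      · rw [show ((-1 : ℤ)) = -(1 : ℤ) from by ring, hGodd 1, hG1]; push_cast; ring
      · rw [hG0]; push_cast; ring
      · rw [hG1]; push_cast; ring
  -- finish
  refine ⟨Φ, ?_, ?_⟩
  · intro i j
    by_cases hij : i + j + 1 = 0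
    · have hj : j = -1 - i := by omega
      subst hj
      rw [hD2E i (-1 - i), hfapp i]
      rw [if_pos hij, if_pos (show i + 1 + (-1 - i) = 0 from by omega),
        if_pos (show -1 - i + 1 + i = 0 from by omega)]
      rw [show i + (-1 - i) = (-1 : ℤ) from by ring,
        show (-1 - i + 1 : ℤ) = -i from by ring]
      rw [ham1, haodd i]
      push_cast
      linear_combination -(hEq i)
    · rw [hD2E i j, hdeg i j 1 (by omega)]
      rw [if_neg hij, if_neg (show ¬(i + 1 + j = 0) from by omega),
        if_neg (show ¬(j + 1 + i = 0) from by omega)]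
      ring
  · intro i j
    have hinner : ψ' ![E 2, E (-2), t] - lieD2 K Φ (E 2) (E (-2)) t = G 2 := by
      rw [hD2t 2 (-2), hg'app 2, if_pos (show (2 : ℤ) + -2 = 0 from by norm_num), ← hGapp 2]
      push_cast
      ring
    rw [hinner]
    by_cases hij : i = -j
    · subst hij
      rw [hD2t (-j) j, if_pos rfl, if_pos (show -j + j = 0 from by omega)]
      have hgg : ψ' ![E (-j), E j, t] = g' (-j) := by
        rw [← hg'app (-j), show (-(-j) : ℤ) = j from neg_neg j]
      rw [hgg]
      have h2 := hGint (-j)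
      rw [← hGapp (-j)] at h2
      push_cast at h2 ⊢
      linear_combination h2
    · rw [hD2t i j, hdegt i j (by omega), if_neg hij,
        if_neg (show ¬(i + j = 0) from by omega)]
      ring
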